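/- Let 1 ≤ p ≤ ∞ with conjugate exponent p', let Γ = (a, b) be a real interval, u ∈ L^{p'}(Γ) and v₁, v₂ ∈ L^p(Γ). With A(Γ, u, v) = sup_{‖f‖_p = 1} inf_{α ∈ ℝ} ‖v(x)(∫_a^x u f dt − α)‖_p, one has |A(Γ, u, v₁) − A(Γ, u, v₂)| ≤ 2 ‖v₁ − v₂‖_p ‖u‖_{p'}. -/

import Mathlib

open MeasureTheory ENNReal

/-- The best rank-one approximation functional `A(Γ, u, v)` of the Hardy operator
`T f(x) = v(x) ∫_a^x u f dt` on the set `S ⊆ ℝ` with base point `a`: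
`A = sup_{f ∈ L^p(S), ‖f‖_p ≤ 1} inf_{α ∈ ℝ} ‖v·(∫_a^· u f − α)‖_{p,S}`. -/
noncomputable def hardyA (p : ℝ≥0∞) (a : ℝ) (S : Set ℝ) (u v : ℝ → ℝ) : ℝ≥0∞ :=
  ⨆ (f : ℝ → ℝ) (_ : MeasureTheory.MemLp f p (MeasureTheory.volume.restrict S) ∧
      MeasureTheory.eLpNorm f p (MeasureTheory.volume.restrict S) ≤ 1),
    ⨅ α : ℝ, MeasureTheory.eLpNorm
      (fun x => v x * ((∫ t in Set.Ioc a x ∩ S, u t * f t) - α)) p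
      (MeasureTheory.volume.restrict S)

/-- Clamping `α` to `[-M, M]` does not increase distance to a point of `[-M, M]`. -/
lemma abs_sub_clamp_le {M y α : ℝ} (hy : |y| ≤ M) :
    |y - max (-M) (min M α)| ≤ |y - α| := by
  obtain ⟨h1, h2⟩ := abs_le.mp hy
  rcases le_total M α with h | h
  · rw [min_eq_left h, max_eq_right (by linarith : -M ≤ M),
      abs_of_nonpos (by linarith), abs_of_nonpos (by linarith)]
    linarith
  · rw [min_eq_right h]
    rcases le_total (-M) α with h' | h'
    · rw [max_eq_right h']
    · rw [max_eq_left h', abs_of_nonneg (by linarith), abs_of_nonneg (by linarith)]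
      linarith

/-- Inner key inequality: changing the weight inside the inf over `α` costs at most
`2 M ‖w₁ - w₂‖_p` when `|F| ≤ M` pointwise. -/
lemma hardy_inner_key (p : ℝ≥0∞) (hp : 1 ≤ p) (μ : Measure ℝ) (w₁ w₂ F : ℝ → ℝ) (M : ℝ)
    (hw₁ : AEStronglyMeasurable w₁ μ) (hw₂ : AEStronglyMeasurable w₂ μ)
    (hF : AEStronglyMeasurable F μ) (hFM : ∀ x, |F x| ≤ M) :
    (⨅ α : ℝ, eLpNorm (fun x => w₁ x * (F x - α)) p μ)
      ≤ (⨅ α : ℝ, eLpNorm (fun x => w₂ x * (F x - α)) p μ)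
        + ENNReal.ofReal (2 * M) * eLpNorm (w₁ - w₂) p μ := by
  rw [ENNReal.iInf_add]
  refine le_iInf fun α => ?_
  set β := max (-M) (min M α) with hβdef
  have hM0 : 0 ≤ M := le_trans (abs_nonneg _) (hFM 0)
  have hβ : |β| ≤ M := by
    rw [abs_le]
    exact ⟨le_max_left _ _, max_le (by linarith) (min_le_left _ _)⟩
  refine iInf_le_of_le β ?_
  have hsum : (fun x => w₁ x * (F x - β))
      = (fun x => w₂ x * (F x - β)) + fun x => (w₁ x - w₂ x) * (F x - β) := by
    funext x; simp only [Pi.add_apply]; ring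
  have sm₂ : AEStronglyMeasurable (fun x => w₂ x * (F x - β)) μ :=
    hw₂.mul (hF.sub aestronglyMeasurable_const)
  have smd : AEStronglyMeasurable (fun x => (w₁ x - w₂ x) * (F x - β)) μ :=
    (hw₁.sub hw₂).mul (hF.sub aestronglyMeasurable_const)
  have hmono : eLpNorm (fun x => w₂ x * (F x - β)) p μ
      ≤ eLpNorm (fun x => w₂ x * (F x - α)) p μ := by
    refine eLpNorm_mono fun x => ?_
    simp only [Real.norm_eq_abs, abs_mul]
    exact mul_le_mul_of_nonneg_left (abs_sub_clamp_le (hFM x)) (abs_nonneg _)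
  have hdiff : eLpNorm (fun x => (w₁ x - w₂ x) * (F x - β)) p μ
      ≤ ENNReal.ofReal (2 * M) * eLpNorm (w₁ - w₂) p μ := by
    have step : eLpNorm (fun x => (w₁ x - w₂ x) * (F x - β)) p μ
        ≤ eLpNorm ((2 * M) • (w₁ - w₂)) p μ := by
      refine eLpNorm_mono fun x => ?_
      simp only [Pi.smul_apply, Pi.sub_apply, smul_eq_mul, Real.norm_eq_abs, abs_mul]
      rw [mul_comm]
      have h1 := abs_le.mp (hFM x)
      have h2 := abs_le.mp hβ
      have h3 : |F x - β| ≤ |2| * |M| := by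
        rw [abs_two, abs_of_nonneg hM0]
        exact abs_le.mpr ⟨by linarith, by linarith⟩
      exact mul_le_mul_of_nonneg_right h3 (abs_nonneg _)
    refine step.trans ?_
    rw [eLpNorm_const_smul, Real.enorm_eq_ofReal (by linarith : (0:ℝ) ≤ 2 * M)]
  calc eLpNorm (fun x => w₁ x * (F x - β)) p μ
      ≤ eLpNorm (fun x => w₂ x * (F x - β)) p μ
        + eLpNorm (fun x => (w₁ x - w₂ x) * (F x - β)) p μ := by
        rw [hsum]; exact eLpNorm_add_le sm₂ smd hp
    _ ≤ eLpNorm (fun x => w₂ x * (F x - α)) p μ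
        + ENNReal.ofReal (2 * M) * eLpNorm (w₁ - w₂) p μ := add_le_add hmono hdiff

/-- One-sided key inequality. -/
lemma hardyA_key (p q : ℝ≥0∞) (hp : 1 ≤ p) (hpq : 1 / p + 1 / q = 1)
    (a : ℝ) (S : Set ℝ) (u w₁ w₂ : ℝ → ℝ)
    (hu : MemLp u q (volume.restrict S))
    (hw₁ : MemLp w₁ p (volume.restrict S)) (hw₂ : MemLp w₂ p (volume.restrict S)) :
    hardyA p a S u w₁ ≤ hardyA p a S u w₂
        + 2 * (eLpNorm (w₁ - w₂) p (volume.restrict S) * eLpNorm u q (volume.restrict S)) := by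
  unfold hardyA
  refine iSup₂_le fun f hf => ?_
  obtain ⟨hfmem, hfle⟩ := hf
  have hgsm : AEStronglyMeasurable (fun t => u t * f t) (volume.restrict S) :=
    hu.1.mul hfmem.1
  have hold : eLpNorm (fun t => u t * f t) 1 (volume.restrict S)
      ≤ eLpNorm u q (volume.restrict S) * eLpNorm f p (volume.restrict S) := by
    have hH : ENNReal.HolderTriple q p 1 := ⟨by rw [inv_one, add_comm]; simpa only [one_div] using hpq⟩
    have h := eLpNorm_smul_le_mul_eLpNorm (μ := volume.restrict S) (p := q) (q := p) (r := 1)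
      hfmem.1 hu.1
    exact h
  have hgK : eLpNorm (fun t => u t * f t) 1 (volume.restrict S)
      ≤ eLpNorm u q (volume.restrict S) := by
    calc eLpNorm (fun t => u t * f t) 1 (volume.restrict S)
        ≤ eLpNorm u q (volume.restrict S) * eLpNorm f p (volume.restrict S) := hold
      _ ≤ eLpNorm u q (volume.restrict S) * 1 := mul_le_mul_right hfle _
      _ = eLpNorm u q (volume.restrict S) := mul_one _
  have hgfin : eLpNorm (fun t => u t * f t) 1 (volume.restrict S) < ⊤ :=
    lt_of_le_of_lt hgK hu.2
  have hgint : Integrable (fun t => u t * f t) (volume.restrict S) :=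
    memLp_one_iff_integrable.mp ⟨hgsm, hgfin⟩
  set M : ℝ := (eLpNorm (fun t => u t * f t) 1 (volume.restrict S)).toReal with hM
  have hrr : ∀ x : ℝ, volume.restrict (Set.Ioc a x ∩ S)
      = (volume.restrict S).restrict (Set.Ioc a x) :=
    fun x => (Measure.restrict_restrict measurableSet_Ioc).symm
  have hFeq : (fun x => ∫ t in Set.Ioc a x ∩ S, u t * f t)
      = (fun y => ∫ t in a..y, u t * f t ∂(volume.restrict S)) ∘ fun x => max a x := by
    funext x
    rcases le_total a x with h | h
    · simp only [Function.comp_apply, max_eq_right h]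
      rw [intervalIntegral.integral_of_le h, ← hrr x]
    · simp only [Function.comp_apply, max_eq_left h]
      rw [Set.Ioc_eq_empty (not_lt.mpr h), Set.empty_inter]
      simp [Measure.restrict_empty]
  have hFcont : Continuous (fun x => ∫ t in Set.Ioc a x ∩ S, u t * f t) := by
    rw [hFeq]
    exact (hgint.continuous_primitive a).comp (continuous_const.max continuous_id)
  have hFsm : AEStronglyMeasurable (fun x => ∫ t in Set.Ioc a x ∩ S, u t * f t)
      (volume.restrict S) := hFcont.aestronglyMeasurable
  have hFM : ∀ x, |∫ t in Set.Ioc a x ∩ S, u t * f t| ≤ M := by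
    intro x
    have h1 : |∫ t in Set.Ioc a x ∩ S, u t * f t| ≤ ∫ t in Set.Ioc a x ∩ S, |u t * f t| := by
      simpa only [Real.norm_eq_abs] using norm_integral_le_integral_norm
        (μ := volume.restrict (Set.Ioc a x ∩ S)) (fun t => u t * f t)
    have h2 : (∫ t in Set.Ioc a x ∩ S, |u t * f t|) ≤ ∫ t in S, |u t * f t| := by
      refine setIntegral_mono_set (by simpa only [Real.norm_eq_abs] using hgint.norm :
          Integrable (fun t => |u t * f t|) (volume.restrict S))
        (Filter.Eventually.of_forall fun t => abs_nonneg _)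
        (HasSubset.Subset.eventuallyLE Set.inter_subset_right)
    have h3 : (∫ t in S, |u t * f t|) = M := by
      rw [hM, eLpNorm_one_eq_lintegral_enorm,
        ← integral_norm_eq_lintegral_enorm hgsm]
      simp only [Real.norm_eq_abs]
    linarith
  have key := hardy_inner_key p hp (volume.restrict S) w₁ w₂
    (fun x => ∫ t in Set.Ioc a x ∩ S, u t * f t) M hw₁.1 hw₂.1 hFsm hFM
  have hcost : ENNReal.ofReal (2 * M) * eLpNorm (w₁ - w₂) p (volume.restrict S)
      ≤ 2 * (eLpNorm (w₁ - w₂) p (volume.restrict S) * eLpNorm u q (volume.restrict S)) := by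
    have h1 : ENNReal.ofReal (2 * M)
        = 2 * eLpNorm (fun t => u t * f t) 1 (volume.restrict S) := by
      rw [ENNReal.ofReal_mul (by norm_num), ENNReal.ofReal_ofNat, hM,
        ENNReal.ofReal_toReal hgfin.ne]
    rw [h1, mul_assoc]
    refine mul_le_mul_right ?_ 2
    rw [mul_comm]
    exact mul_le_mul_right hgK _
  refine le_trans key (add_le_add ?_ hcost)
  exact le_iSup₂ (f := fun f' (_ : MemLp f' p (volume.restrict S) ∧
      eLpNorm f' p (volume.restrict S) ≤ 1) => ⨅ α : ℝ,
      eLpNorm (fun x => w₂ x * ((∫ t in Set.Ioc a x ∩ S, u t * f' t) - α)) p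
        (volume.restrict S)) f ⟨hfmem, hfle⟩

/-- Lipschitz continuity of `A(Γ, u, v)` in the weight `v`, with constant 2:
`|A(Γ, u, v₁) − A(Γ, u, v₂)| ≤ 2 ‖v₁ − v₂‖_p ‖u‖_{p'}` (as two one-sided inequalities in
`ℝ≥0∞`). Here `1/p + 1/p' = 1`. -/
theorem stmt_6 (p q : ℝ≥0∞) (hp : 1 ≤ p) (hpq : 1 / p + 1 / q = 1)
    (a : ℝ) (S : Set ℝ) (hS : MeasurableSet S) (u v₁ v₂ : ℝ → ℝ)
    (hu : MemLp u q (volume.restrict S))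
    (hv₁ : MemLp v₁ p (volume.restrict S)) (hv₂ : MemLp v₂ p (volume.restrict S)) :
    hardyA p a S u v₁ ≤ hardyA p a S u v₂
        + 2 * (eLpNorm (v₁ - v₂) p (volume.restrict S) * eLpNorm u q (volume.restrict S)) ∧
    hardyA p a S u v₂ ≤ hardyA p a S u v₁
        + 2 * (eLpNorm (v₁ - v₂) p (volume.restrict S) * eLpNorm u q (volume.restrict S)) := by
  constructor
  · exact hardyA_key p q hp hpq a S u v₁ v₂ hu hv₁ hv₂
  · have h := hardyA_key p q hp hpq a S u v₂ v₁ hu hv₂ hv₁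
    rwa [eLpNorm_sub_comm] at h
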